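/- Let f : ℝ → ℝ be of class C^{n-1} for some n ≥ 1, with f^{(n-1)} absolutely continuous, and suppose there exist C > 0 and r ≥ 1 such that |f^{(n)}(ξ)| ≤ C (1+ξ²)^{(r-1)/2} for almost every ξ. Then for all integers m₀, m₁, ..., mₙ, the alternating sum over subsets I of {1,...,n} of (-1)^{|I|} f(m₀ + Σ_{j∈I} m_j) is bounded in absolute value by 2^{n(r-1)/2} · C · (1+m₀²)^{(r-1)/2} · ∏_{j=1}^{n} (1+m_j²)^{r/2}. -/

import Mathlib

open MeasureTheory Finset



private lemma one_add_sq_mul (t s : ℝ) : 1 + (t + s) ^ 2 ≤ 2 * (1 + t ^ 2) * (1 + s ^ 2) := by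
  nlinarith [sq_nonneg (t - s), sq_nonneg (t * s)]

private lemma rpow_half_r {c r : ℝ} (hr : 1 ≤ r) :
    (1 + c ^ 2) ^ ((r - 1) / 2) * |c| ≤ (1 + c ^ 2) ^ (r / 2) := by
  have h1 : (0:ℝ) < 1 + c ^ 2 := by positivity
  have habs : |c| ≤ (1 + c ^ 2) ^ ((1:ℝ)/2) := by
    have : |c| = (c ^ 2) ^ ((1:ℝ)/2) := by
      rw [← Real.sqrt_eq_rpow, Real.sqrt_sq_eq_abs]
    rw [this]
    exact Real.rpow_le_rpow (sq_nonneg c) (by linarith) (by norm_num)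
  calc (1 + c ^ 2) ^ ((r - 1) / 2) * |c|
      ≤ (1 + c ^ 2) ^ ((r - 1) / 2) * (1 + c ^ 2) ^ ((1:ℝ)/2) := by
        exact mul_le_mul_of_nonneg_left habs (Real.rpow_nonneg h1.le _)
    _ = (1 + c ^ 2) ^ (r / 2) := by
        rw [← Real.rpow_add h1]; ring_nf

private lemma diff_bound {C r : ℝ} (hC : 0 ≤ C) (hr : 1 ≤ r) {f' : ℝ → ℝ}
    (hbound : ∀ᵐ ξ : ℝ, |f' ξ| ≤ C * (1 + ξ ^ 2) ^ ((r - 1) / 2)) (t c : ℝ) :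
    |∫ s in t..(t + c), f' s|
      ≤ 2 ^ ((r - 1) / 2) * C * (1 + t ^ 2) ^ ((r - 1) / 2) * (1 + c ^ 2) ^ (r / 2) := by
  have he : 0 ≤ (r - 1) / 2 := by linarith
  set B : ℝ := C * (2 ^ ((r - 1) / 2) * (1 + t ^ 2) ^ ((r - 1) / 2) * (1 + c ^ 2) ^ ((r - 1) / 2))
    with hB
  have key : ∀ᵐ x : ℝ, x ∈ Set.uIoc t (t + c) → ‖f' x‖ ≤ B := by
    filter_upwards [hbound] with x hx hmem
    have h1 : (x - t) ^ 2 ≤ c ^ 2 := by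
      rcases Set.mem_uIoc.mp hmem with ⟨ha, hb⟩ | ⟨ha, hb⟩ <;> nlinarith
    have h2 : 1 + x ^ 2 ≤ 2 * (1 + t ^ 2) * (1 + c ^ 2) := by
      have h3 := one_add_sq_mul t (x - t)
      nlinarith [sq_nonneg t]
    calc ‖f' x‖ = |f' x| := rfl
      _ ≤ C * (1 + x ^ 2) ^ ((r - 1) / 2) := hx
      _ ≤ C * (2 * (1 + t ^ 2) * (1 + c ^ 2)) ^ ((r - 1) / 2) :=
          mul_le_mul_of_nonneg_left (Real.rpow_le_rpow (by positivity) h2 he) hC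
      _ = B := by
          rw [hB, Real.mul_rpow (by positivity) (by positivity),
            Real.mul_rpow (by positivity) (by positivity)]
  have hmain := intervalIntegral.norm_integral_le_of_norm_le_const_ae key
  simp only [add_sub_cancel_left] at hmain
  calc |∫ s in t..(t + c), f' s| ≤ B * |c| := hmain
    _ = 2 ^ ((r - 1) / 2) * C * (1 + t ^ 2) ^ ((r - 1) / 2)
        * ((1 + c ^ 2) ^ ((r - 1) / 2) * |c|) := by rw [hB]; ring
    _ ≤ 2 ^ ((r - 1) / 2) * C * (1 + t ^ 2) ^ ((r - 1) / 2) * (1 + c ^ 2) ^ (r / 2) := by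
        refine mul_le_mul_of_nonneg_left (rpow_half_r hr) (by positivity)

private lemma ftc_iter {n : ℕ} {f : ℝ → ℝ} (hf : ContDiff ℝ ((n + 1 : ℕ) : ℕ∞) f) (a b : ℝ) :
    iteratedDeriv n f b - iteratedDeriv n f a = ∫ t in a..b, iteratedDeriv (n + 1) f t := by
  symm
  apply intervalIntegral.integral_eq_sub_of_hasDerivAt
  · intro x _
    have hd : DifferentiableAt ℝ (iteratedDeriv n f) x :=
      (hf.differentiable_iteratedDeriv n (by exact_mod_cast Nat.lt_succ_self n)).differentiableAt
    rw [iteratedDeriv_succ]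
    exact hd.hasDerivAt
  · exact (hf.continuous_iteratedDeriv (n + 1) (by exact_mod_cast le_rfl)).intervalIntegrable a b

private lemma my_iteratedDeriv_sub {n : ℕ} {f g : ℝ → ℝ}
    (hf : ContDiff ℝ (n : ℕ∞) f) (hg : ContDiff ℝ (n : ℕ∞) g) (x : ℝ) :
    iteratedDeriv n (fun y => f y - g y) x = iteratedDeriv n f x - iteratedDeriv n g x := by
  simp_rw [← iteratedDerivWithin_univ]
  exact iteratedDerivWithin_sub (Set.mem_univ x) uniqueDiffOn_univ
    hf.contDiffAt.contDiffWithinAt hg.contDiffAt.contDiffWithinAt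


private lemma powerset_map_eq {α β : Type*} [DecidableEq α] [DecidableEq β]
    (s : Finset α) (f : α ↪ β) :
    (s.map f).powerset = s.powerset.image (Finset.map f) := by
  ext t
  simp only [Finset.mem_powerset, Finset.subset_map_iff, Finset.mem_image]
  constructor
  · rintro ⟨u, hu, rfl⟩; exact ⟨u, hu, rfl⟩
  · rintro ⟨u, hu, rfl⟩; exact ⟨u, hu, rfl⟩

private lemma sum_split (n : ℕ) (F : Finset (Fin (n + 1)) → ℝ) :
    ∑ I : Finset (Fin (n + 1)), F I =
      ∑ J : Finset (Fin n),
        (F (J.map Fin.castSuccEmb) + F (insert (Fin.last n) (J.map Fin.castSuccEmb))) := by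
  classical
  rw [← Finset.powerset_univ, Fin.univ_castSuccEmb, Finset.cons_eq_insert,
    Finset.sum_powerset_insert (by simp [Fin.castSuccEmb]; intro x; exact (Fin.castSucc_lt_last x).ne)]
  rw [powerset_map_eq, Finset.sum_image (fun a _ b _ h => Finset.map_injective _ h),
    Finset.sum_image (fun a _ b _ h => Finset.map_injective _ h),
    Finset.powerset_univ, ← Finset.sum_add_distrib]
private lemma aux (n : ℕ) : ∀ (C r : ℝ), 0 < C → 1 ≤ r → ∀ (f f' : ℝ → ℝ),
    ContDiff ℝ (n : ℕ∞) f →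
    (∀ a b : ℝ, iteratedDeriv n f b - iteratedDeriv n f a = ∫ t in a..b, f' t) →
    (∀ᵐ ξ : ℝ, |f' ξ| ≤ C * (1 + ξ ^ 2) ^ ((r - 1) / 2)) →
    ∀ (m₀ : ℝ) (m : Fin (n + 1) → ℝ),
      |∑ I : Finset (Fin (n + 1)), (-1 : ℝ) ^ I.card * f (m₀ + ∑ j ∈ I, m j)|
        ≤ 2 ^ (((n : ℝ) + 1) * (r - 1) / 2) * C * (1 + m₀ ^ 2) ^ ((r - 1) / 2)
          * ∏ j, (1 + (m j) ^ 2) ^ (r / 2) := by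
  induction n with
  | zero =>
    intro C r hC hr f f' hf hFTC hbound m₀ m
    have h0 := hFTC m₀ (m₀ + m 0)
    simp only [iteratedDeriv_zero] at h0
    have hsum : ∑ I : Finset (Fin 1), (-1 : ℝ) ^ I.card * f (m₀ + ∑ j ∈ I, m j)
        = -(∫ t in m₀..(m₀ + m 0), f' t) := by
      rw [show (univ : Finset (Finset (Fin 1))) = {∅, {0}} from by decide,
        Finset.sum_insert (by decide), Finset.sum_singleton]
      simp only [Finset.card_empty, Finset.card_singleton, Finset.sum_empty,
        Finset.sum_singleton, pow_zero, pow_one, one_mul, neg_one_mul, add_zero]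
      linarith
    rw [hsum, abs_neg]
    refine le_trans (diff_bound hC.le hr hbound m₀ (m 0)) (le_of_eq ?_)
    rw [Fin.prod_univ_one]
    norm_num
  | succ k ih =>
    intro C r hC hr f f' hf hFTC hbound m₀ m
    set c : ℝ := m (Fin.last (k + 1)) with hc
    set g : ℝ → ℝ := fun x => f x - f (x + c) with hg
    set g' : ℝ → ℝ := fun t => iteratedDeriv (k + 1) f t - iteratedDeriv (k + 1) f (t + c)
      with hg'
    have hfc : ContDiff ℝ ((k + 1 : ℕ) : ℕ∞) (fun x => f (x + c)) :=
      hf.comp (contDiff_id.add contDiff_const)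
    have hgC : ContDiff ℝ ((k : ℕ) : ℕ∞) g :=
      (hf.sub hfc).of_le (by exact_mod_cast Nat.le_succ k)
    have hidk : ∀ x : ℝ, iteratedDeriv k g x
        = iteratedDeriv k f x - iteratedDeriv k f (x + c) := by
      intro x
      rw [hg]
      rw [my_iteratedDeriv_sub (hf.of_le (by exact_mod_cast Nat.le_succ k))
        (hfc.of_le (by exact_mod_cast Nat.le_succ k)), iteratedDeriv_comp_add_const]
    have hcontD : Continuous (iteratedDeriv (k + 1) f) :=
      hf.continuous_iteratedDeriv (k + 1) (by exact_mod_cast le_rfl)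
    have hFTCg : ∀ a b : ℝ, iteratedDeriv k g b - iteratedDeriv k g a = ∫ t in a..b, g' t := by
      intro a b
      rw [hidk, hidk]
      have h1 := ftc_iter hf a b
      have h2 := ftc_iter hf (a + c) (b + c)
      have hcont2 : Continuous fun t : ℝ => iteratedDeriv (k + 1) f (t + c) :=
        hcontD.comp (continuous_id.add continuous_const)
      have h3 : ∫ t in a..b, iteratedDeriv (k + 1) f (t + c)
          = ∫ t in (a + c)..(b + c), iteratedDeriv (k + 1) f t :=
        intervalIntegral.integral_comp_add_right _ c
      simp only [hg']
      rw [intervalIntegral.integral_sub (hcontD.intervalIntegrable a b)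
        (hcont2.intervalIntegrable a b), h3, ← h1, ← h2]
      ring
    set C' : ℝ := 2 ^ ((r - 1) / 2) * (1 + c ^ 2) ^ (r / 2) * C with hC'
    have hC'pos : 0 < C' := by positivity
    have hboundg : ∀ᵐ t : ℝ, |g' t| ≤ C' * (1 + t ^ 2) ^ ((r - 1) / 2) := by
      refine Filter.Eventually.of_forall fun t => ?_
      have heq : g' t = -(∫ s in t..(t + c), f' s) := by
        have h := hFTC t (t + c)
        simp only [hg']
        linarith
      rw [heq, abs_neg]
      calc |∫ s in t..(t + c), f' s|
          ≤ 2 ^ ((r - 1) / 2) * C * (1 + t ^ 2) ^ ((r - 1) / 2) * (1 + c ^ 2) ^ (r / 2) :=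
            diff_bound hC.le hr hbound t c
        _ = C' * (1 + t ^ 2) ^ ((r - 1) / 2) := by rw [hC']; ring
    have hih := ih C' r hC'pos hr g g' hgC hFTCg hboundg m₀ (fun j => m j.castSucc)
    have hsum : ∑ I : Finset (Fin (k + 1 + 1)), (-1 : ℝ) ^ I.card * f (m₀ + ∑ j ∈ I, m j)
        = ∑ J : Finset (Fin (k + 1)), (-1 : ℝ) ^ J.card * g (m₀ + ∑ j ∈ J, m j.castSucc) := by
      rw [sum_split]
      refine Finset.sum_congr rfl fun J _ => ?_
      have hlast : Fin.last (k + 1) ∉ J.map Fin.castSuccEmb := by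
        simp only [Finset.mem_map, not_exists, not_and]
        intro x _
        exact (Fin.castSucc_lt_last x).ne
      rw [Finset.sum_insert hlast, Finset.card_insert_of_notMem hlast, Finset.card_map,
        Finset.sum_map]
      simp only [hg, Fin.coe_castSuccEmb, ← hc, pow_succ]
      rw [show m₀ + (c + ∑ x ∈ J, m x.castSucc) = m₀ + (∑ j ∈ J, m j.castSucc) + c from by ring]
      ring
    rw [hsum]
    calc |∑ J : Finset (Fin (k + 1)), (-1 : ℝ) ^ J.card * g (m₀ + ∑ j ∈ J, m j.castSucc)|
        ≤ 2 ^ (((k : ℝ) + 1) * (r - 1) / 2) * C' * (1 + m₀ ^ 2) ^ ((r - 1) / 2)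
          * ∏ j : Fin (k + 1), (1 + (m j.castSucc) ^ 2) ^ (r / 2) := hih
      _ = 2 ^ ((((k + 1 : ℕ) : ℝ) + 1) * (r - 1) / 2) * C * (1 + m₀ ^ 2) ^ ((r - 1) / 2)
          * ∏ j : Fin (k + 1 + 1), (1 + (m j) ^ 2) ^ (r / 2) := by
          conv_rhs => rw [Fin.prod_univ_castSucc]
          rw [hC', show ((((k + 1 : ℕ)) : ℝ) + 1) * (r - 1) / 2
            = ((k : ℝ) + 1) * (r - 1) / 2 + (r - 1) / 2 from by push_cast; ring,
            Real.rpow_add two_pos, ← hc]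
          ring

/-- If `f : ℝ → ℝ` is `C^{n-1}` (`n ≥ 1`), `f^{(n-1)}` is absolutely
continuous with a.e. derivative `f'` satisfying `|f'(ξ)| ≤ C (1+ξ²)^{(r-1)/2}` a.e.
(`C > 0`, `r ≥ 1`), then the `n`-fold alternating sum of `f` over subsets of `{1,…,n}`
is bounded by `2^{n(r-1)/2} C (1+m₀²)^{(r-1)/2} ∏_j (1+m_j²)^{r/2}`. -/
theorem stmt0 (n : ℕ) (hn : 1 ≤ n) (C r : ℝ) (hC : 0 < C) (hr : 1 ≤ r)
    (f f' : ℝ → ℝ)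
    (hf : ContDiff ℝ ((n - 1 : ℕ) : ℕ∞) f)
    (hloc : LocallyIntegrable f' volume)
    (hFTC : ∀ a b : ℝ, iteratedDeriv (n - 1) f b - iteratedDeriv (n - 1) f a
      = ∫ t in a..b, f' t)
    (hbound : ∀ᵐ ξ : ℝ, |f' ξ| ≤ C * (1 + ξ ^ 2) ^ ((r - 1) / 2)) :
    ∀ (m₀ : ℤ) (m : Fin n → ℤ),
      |∑ I : Finset (Fin n), (-1 : ℝ) ^ I.card * f ((m₀ : ℝ) + ∑ j ∈ I, (m j : ℝ))|
        ≤ 2 ^ ((n : ℝ) * (r - 1) / 2) * C * (1 + (m₀ : ℝ) ^ 2) ^ ((r - 1) / 2)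
          * ∏ j, (1 + (m j : ℝ) ^ 2) ^ (r / 2) := by
  obtain ⟨k, rfl⟩ : ∃ k, n = k + 1 := ⟨n - 1, (Nat.succ_pred_eq_of_pos hn).symm⟩
  intro m₀ m
  have h := aux k C r hC hr f f' hf hFTC hbound (m₀ : ℝ) (fun j => (m j : ℝ))
  rw [show ((k + 1 : ℕ) : ℝ) = (k : ℝ) + 1 from by push_cast; ring]
  exact h
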